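/- In the ring ℂ[t]/⟨t³⟩ ⊕ ℂ[t]/⟨t²⟩ ⊕ ℂ[t]/⟨t²⟩ with generators 1_1, 1_ω, 1_{ω⁻¹}, the virtual product (table: 1_ω⋆1_ω = t·1_{ω⁻¹}, 1_ω⋆1_{ω⁻¹} = t²·1_1, 1_{ω⁻¹}⋆1_{ω⁻¹} = t·1_ω) and the cotangent orbifold product (table: 1_ω⋆'1_ω = −t·1_{ω⁻¹}, 1_ω⋆'1_{ω⁻¹} = −t²·1_1, 1_{ω⁻¹}⋆'1_{ω⁻¹} = t·1_ω) are isomorphic as rings, via the ℂ-linear automorphism Θ acting as the identity on the 1_1-summand, by multiplication by e^{2πi/3} on the 1_ω-summand, and by e^{πi/3} on the 1_{ω⁻¹}-summand: Θ(x ⋆ y) = Θ(x) ⋆' Θ(y). -/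

import Mathlib

open Polynomial

/-- `ℂ[t]/⟨t³⟩`, the Chow ring of the untwisted sector of `P(1,3,3)`. -/
noncomputable abbrev CA : Type :=
  Polynomial ℂ ⧸ Ideal.span ({Polynomial.X ^ 3} : Set (Polynomial ℂ))

/-- `ℂ[t]/⟨t²⟩`, the Chow ring of each twisted sector of `P(1,3,3)`. -/
noncomputable abbrev CB : Type :=
  Polynomial ℂ ⧸ Ideal.span ({Polynomial.X ^ 2} : Set (Polynomial ℂ))

noncomputable def cmkA : Polynomial ℂ →+* CA := Ideal.Quotient.mk _
noncomputable def cmkB : Polynomial ℂ →+* CB := Ideal.Quotient.mk _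

/-- `t` in `ℂ[t]/⟨t²⟩`. -/
noncomputable def tB : CB := cmkB Polynomial.X

/-- The module `M = ℂ[t]/⟨t³⟩ ⊕ ℂ[t]/⟨t²⟩ ⊕ ℂ[t]/⟨t²⟩` with sectors
`1₁, 1_ω, 1_{ω⁻¹}`. -/
noncomputable abbrev CM : Type := CA × CB × CB

/-- The virtual product: table `1_ω⋆1_ω = t·1_{ω⁻¹}`, `1_ω⋆1_{ω⁻¹} = t²·1₁`,
`1_{ω⁻¹}⋆1_{ω⁻¹} = t·1_ω`, extended bilinearly using the restriction `π : CA → CB`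
and the pushforward `j : CB → CA` (multiplication by `t²`). -/
noncomputable def cmulV (π : CA →+* CB) (j : CB →ₗ[ℂ] CA) (x y : CM) : CM :=
  (x.1 * y.1 + j (x.2.1 * y.2.2 + x.2.2 * y.2.1),
   π x.1 * y.2.1 + x.2.1 * π y.1 + tB * (x.2.2 * y.2.2),
   π x.1 * y.2.2 + x.2.2 * π y.1 + tB * (x.2.1 * y.2.1))

/-- The cotangent orbifold product: table `1_ω⋆'1_ω = −t·1_{ω⁻¹}`,
`1_ω⋆'1_{ω⁻¹} = −t²·1₁`, `1_{ω⁻¹}⋆'1_{ω⁻¹} = t·1_ω`. -/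
noncomputable def cmulC (π : CA →+* CB) (j : CB →ₗ[ℂ] CA) (x y : CM) : CM :=
  (x.1 * y.1 - j (x.2.1 * y.2.2 + x.2.2 * y.2.1),
   π x.1 * y.2.1 + x.2.1 * π y.1 + tB * (x.2.2 * y.2.2),
   π x.1 * y.2.2 + x.2.2 * π y.1 - tB * (x.2.1 * y.2.1))

/-- The automorphism `Θ`: identity on the `1₁`-summand, multiplication by
`e^{2πi/3}` on the `1_ω`-summand and by `e^{πi/3}` on the `1_{ω⁻¹}`-summand. -/
noncomputable def Theta (x : CM) : CM :=
  (x.1, Complex.exp (2 * Real.pi * Complex.I / 3) • x.2.1,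
    Complex.exp (Real.pi * Complex.I / 3) • x.2.2)

noncomputable def piBA : CA →+* CB := by
  refine Ideal.Quotient.factor ?_
  refine Ideal.span_le.mpr ?_
  intro p hp
  simp at hp
  subst hp
  exact Ideal.mem_span_singleton.mpr ⟨Polynomial.X, by ring⟩

noncomputable def f0 : Polynomial ℂ →ₗ[ℂ] CA :=
  ((Algebra.linearMap (Polynomial ℂ) CA).restrictScalars ℂ).comp
    (LinearMap.mulLeft ℂ (Polynomial.X ^ 2))

noncomputable def jBA : CB →ₗ[ℂ] CA := by
  refine Submodule.liftQ
    ((Ideal.span ({Polynomial.X ^ 2} : Set (Polynomial ℂ))).restrictScalars ℂ) f0 ?_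
  intro p hp
  simp only [Submodule.restrictScalars_mem, Ideal.mem_span_singleton] at hp
  obtain ⟨q, rfl⟩ := hp
  have : cmkA (Polynomial.X ^ 2 * (Polynomial.X ^ 2 * q)) = 0 := by
    rw [show Polynomial.X ^ 2 * (Polynomial.X ^ 2 * q)
        = Polynomial.X ^ 3 * (Polynomial.X * q) by ring]
    exact (Ideal.Quotient.eq_zero_iff_mem).mpr
      (Ideal.mem_span_singleton.mpr ⟨Polynomial.X * q, rfl⟩)
  exact this

lemma jBA_apply (p : Polynomial ℂ) : jBA (cmkB p) = cmkA (Polynomial.X ^ 2 * p) :=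
  Submodule.liftQ_apply _ f0 p

lemma zmu : Complex.exp (2 * Real.pi * Complex.I / 3) * Complex.exp (Real.pi * Complex.I / 3)
    = -1 := by
  rw [← Complex.exp_add, show (2 * Real.pi * Complex.I / 3 + Real.pi * Complex.I / 3 : ℂ)
      = Real.pi * Complex.I by ring]
  exact Complex.exp_pi_mul_I

lemma mumu : Complex.exp (Real.pi * Complex.I / 3) * Complex.exp (Real.pi * Complex.I / 3)
    = Complex.exp (2 * Real.pi * Complex.I / 3) := by
  rw [← Complex.exp_add]; ring_nf

lemma zz : Complex.exp (2 * Real.pi * Complex.I / 3) * Complex.exp (2 * Real.pi * Complex.I / 3)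
    = -Complex.exp (Real.pi * Complex.I / 3) := by
  rw [← Complex.exp_add, show (2 * Real.pi * Complex.I / 3 + 2 * Real.pi * Complex.I / 3 : ℂ)
      = Real.pi * Complex.I + Real.pi * Complex.I / 3 by ring,
    Complex.exp_add, Complex.exp_pi_mul_I]
  ring

/-- The virtual product and the cotangent orbifold product on the Chow groups of
`I P(1,3,3)` are isomorphic as rings via `Θ`: `Θ` is bijective and
`Θ(x ⋆ y) = Θ(x) ⋆' Θ(y)`. -/
theorem virtual_iso_cotangent_P133 :
    ∃ (π : CA →+* CB) (j : CB →ₗ[ℂ] CA),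
      (∀ p : Polynomial ℂ, π (cmkA p) = cmkB p) ∧
      (∀ p : Polynomial ℂ, j (cmkB p) = cmkA (Polynomial.X ^ 2 * p)) ∧
      Function.Bijective Theta ∧
      (∀ x y : CM, Theta (cmulV π j x y) = cmulC π j (Theta x) (Theta y)) := by
  refine ⟨piBA, jBA, fun p => rfl, jBA_apply, ?_, ?_⟩
  · refine Function.bijective_iff_has_inverse.mpr
      ⟨fun x => (x.1, Complex.exp (-(2 * Real.pi * Complex.I / 3)) • x.2.1,
        Complex.exp (-(Real.pi * Complex.I / 3)) • x.2.2), ?_, ?_⟩ <;>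
      intro x <;>
      simp [Theta, smul_smul, ← Complex.exp_add, Prod.ext_iff]
  · intro x y
    simp only [cmulV, cmulC, Theta, Prod.mk.injEq]
    refine ⟨?_, ?_, ?_⟩
    · rw [smul_mul_smul_comm, smul_mul_smul_comm, zmu, mul_comm
        (Complex.exp (Real.pi * Complex.I / 3)), zmu, neg_one_smul, neg_one_smul,
        ← neg_add, map_neg, sub_neg_eq_add]
    · simp only [smul_mul_smul_comm, mumu, smul_add, mul_smul_comm, smul_mul_assoc]
      rw [smul_smul, mumu]
    · simp only [smul_mul_smul_comm, zz, neg_smul, mul_neg, sub_neg_eq_add, smul_add,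
        mul_smul_comm, smul_mul_assoc]
      rw [smul_smul, zz, neg_smul, sub_neg_eq_add]
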